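/- arXiv:2402.01089 — 2 statements merged into one kernel-verified Lean document; each statement's English description precedes it below -/
import Mathlib

section
/- Fix ε ∈ (0,1), let f : ℝ^d → [−1,1] be a fixed measurable function, and define the events A_f = { (1/n) Σ_{i=1}^n (y_i − f(x_i))² ≤ σ² − ε }, B = { (1/n) Σ_{i=1}^n z_i² ≥ σ² − ε/6 }, C = { (1/n) Σ_{i=1}^n z_i g(x_i) ≥ −ε/6 }, and D_f = { (1/n) Σ_{i=1}^n f(x_i) z_i ≥ ε/4 }. Then (i) A_f ∩ B ∩ C ⊆ D_f, and (ii) P(Bᶜ ∪ Cᶜ) ≤ 2 exp(−n ε² / 8³). -/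
open MeasureTheory ProbabilityTheory Real

lemma exp_le_one_add_add_sq {u : ℝ} (hu : |u| ≤ 1) : Real.exp u ≤ 1 + u + u ^ 2 := by
  have h := Real.exp_bound hu (n := 3) (by norm_num)
  have hsum : ∑ m ∈ Finset.range 3, u ^ m / m.factorial = 1 + u + u ^ 2 / 2 := by
    norm_num [Finset.sum_range_succ, Nat.factorial]
  rw [hsum] at h
  have h1 := (abs_sub_le_iff.1 h).1
  have h2 : |u| ^ 3 ≤ u ^ 2 := by
    have : |u| ^ 3 ≤ |u| ^ 2 := pow_le_pow_of_le_one (abs_nonneg u) hu (by norm_num)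
    simpa [sq_abs] using this
  have h3 : ((Nat.succ 3 : ℕ) : ℝ) / ((Nat.factorial 3 : ℕ) * (3:ℕ)) = 2 / 9 := by
    norm_num [Nat.factorial]
  rw [h3] at h1
  nlinarith

lemma chernoff_aux {Ω : Type*} [MeasurableSpace Ω] (P : Measure Ω) [IsProbabilityMeasure P]
    (n : ℕ) (W : Fin n → Ω → ℝ) (hWm : ∀ i, Measurable (W i))
    (hindep : iIndepFun W P)
    (c v δ : ℝ) (hv : 0 < v) (hδ : 0 < δ)
    (hbd : ∀ i, ∀ᵐ ω ∂P, |W i ω| ≤ c)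
    (hmean : ∀ i, ∫ ω, W i ω ∂P = 0)
    (hvar : ∀ i, ∫ ω, (W i ω) ^ 2 ∂P ≤ v)
    (hdc : δ * c ≤ 2 * v) :
    P {ω | (n : ℝ) * δ ≤ ∑ i, W i ω} ≤
      ENNReal.ofReal (Real.exp (-(n : ℝ) * δ ^ 2 / (4 * v))) := by
  set t : ℝ := δ / (2 * v) with ht_def
  have ht0 : 0 < t := div_pos hδ (by linarith)
  have htc : t * c ≤ 1 := by
    rw [ht_def, div_mul_eq_mul_div, div_le_one (by linarith)]
    linarith
  have hint : ∀ i, Integrable (fun ω => Real.exp (t * W i ω)) P := by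
    intro i
    refine Integrable.mono' (integrable_const (Real.exp (t * c)))
      (((hWm i).const_mul t).exp.aestronglyMeasurable) ?_
    filter_upwards [hbd i] with ω hω
    rw [Real.norm_eq_abs, Real.abs_exp, Real.exp_le_exp]
    calc t * W i ω ≤ t * |W i ω| := by nlinarith [le_abs_self (W i ω)]
      _ ≤ t * c := by nlinarith
  have hWint : ∀ i, Integrable (W i) P := fun i =>
    Integrable.mono' (integrable_const c) (hWm i).aestronglyMeasurable (hbd i)
  have hW2int : ∀ i, Integrable (fun ω => (W i ω) ^ 2) P := fun i =>
    Integrable.mono' (integrable_const (c ^ 2)) ((hWm i).pow_const 2).aestronglyMeasurable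
      (by filter_upwards [hbd i] with ω hω
          rw [Real.norm_eq_abs, abs_pow]
          exact pow_le_pow_left₀ (abs_nonneg _) hω 2)
  have hmgf : ∀ i, mgf (W i) P t ≤ Real.exp (t ^ 2 * v) := by
    intro i
    have h1 : mgf (W i) P t ≤ ∫ ω, (1 + t * W i ω + t ^ 2 * (W i ω) ^ 2) ∂P := by
      refine integral_mono_ae (hint i)
        (((integrable_const (1:ℝ)).add ((hWint i).const_mul t)).add
          ((hW2int i).const_mul (t ^ 2))) ?_
      filter_upwards [hbd i] with ω hω
      have habs : |t * W i ω| ≤ 1 := by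
        rw [abs_mul, abs_of_pos ht0]
        calc t * |W i ω| ≤ t * c := by nlinarith
          _ ≤ 1 := htc
      have := exp_le_one_add_add_sq habs
      calc Real.exp (t * W i ω) ≤ 1 + t * W i ω + (t * W i ω) ^ 2 := this
        _ = 1 + t * W i ω + t ^ 2 * (W i ω) ^ 2 := by ring
    have h2 : ∫ ω, (1 + t * W i ω + t ^ 2 * (W i ω) ^ 2) ∂P =
        1 + t ^ 2 * ∫ ω, (W i ω) ^ 2 ∂P := by
      rw [integral_add (f := fun ω => 1 + t * W i ω) (g := fun ω => t ^ 2 * W i ω ^ 2)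
          ((integrable_const (1:ℝ)).add ((hWint i).const_mul t))
          ((hW2int i).const_mul (t ^ 2)),
        integral_add (f := fun _ => (1:ℝ)) (g := fun ω => t * W i ω)
          (integrable_const (1:ℝ)) ((hWint i).const_mul t),
        integral_const, integral_const_mul, integral_const_mul, hmean i]
      simp
    have h3 : (1 : ℝ) + t ^ 2 * ∫ ω, (W i ω) ^ 2 ∂P ≤ Real.exp (t ^ 2 * v) := by
      calc (1 : ℝ) + t ^ 2 * ∫ ω, (W i ω) ^ 2 ∂P ≤ 1 + t ^ 2 * v := by
            nlinarith [hvar i, sq_nonneg t]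
        _ ≤ Real.exp (t ^ 2 * v) := by linarith [Real.add_one_le_exp (t ^ 2 * v)]
    linarith [h1, h2 ▸ h1]
  have hsum_int : Integrable (fun ω => Real.exp (t * (∑ i, W i) ω)) P :=
    hindep.integrable_exp_mul_sum hWm (fun i _ => hint i)
  have hcher := measure_ge_le_exp_mul_mgf (X := ∑ i, W i) (μ := P) (t := t)
    ((n : ℝ) * δ) ht0.le hsum_int
  have hmgfsum : mgf (∑ i, W i) P t ≤ Real.exp ((n : ℝ) * (t ^ 2 * v)) := by
    rw [hindep.mgf_sum hWm]
    calc ∏ i, mgf (W i) P t ≤ ∏ _i : Fin n, Real.exp (t ^ 2 * v) :=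
          Finset.prod_le_prod (fun i _ => mgf_nonneg) (fun i _ => hmgf i)
      _ = Real.exp ((n : ℝ) * (t ^ 2 * v)) := by
          rw [Finset.prod_const, ← Real.exp_nat_mul]; simp
  have hset : {ω | (n : ℝ) * δ ≤ ∑ i, W i ω} = {ω | (n : ℝ) * δ ≤ (∑ i, W i) ω} := by
    ext ω; simp [Finset.sum_apply]
  have hreal : (P {ω | (n : ℝ) * δ ≤ ∑ i, W i ω}).toReal ≤
      Real.exp (-(n : ℝ) * δ ^ 2 / (4 * v)) := by
    rw [hset]
    calc (P {ω | (n : ℝ) * δ ≤ (∑ i, W i) ω}).toReal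
        ≤ Real.exp (-t * ((n : ℝ) * δ)) * mgf (∑ i, W i) P t := hcher
      _ ≤ Real.exp (-t * ((n : ℝ) * δ)) * Real.exp ((n : ℝ) * (t ^ 2 * v)) :=
          mul_le_mul_of_nonneg_left hmgfsum (Real.exp_pos _).le
      _ = Real.exp (-t * ((n : ℝ) * δ) + (n : ℝ) * (t ^ 2 * v)) := (Real.exp_add _ _).symm
      _ = Real.exp (-(n : ℝ) * δ ^ 2 / (4 * v)) := by
          congr 1
          rw [ht_def]
          field_simp
          ring
  rw [← ENNReal.ofReal_toReal (measure_ne_top P _)]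
  exact ENNReal.ofReal_le_ofReal hreal

lemma aux_hG1 {Ω : Type*} [MeasurableSpace Ω] (P : Measure Ω) [IsProbabilityMeasure P]
    {n d : ℕ} (x : Fin n → Ω → EuclideanSpace ℝ (Fin d)) (y : Fin n → Ω → ℝ)
    (hxm : ∀ i, Measurable (x i)) (hym : ∀ i, Measurable (y i))
    (hy1 : ∀ i ω, y i ω ∈ Set.Icc (-1 : ℝ) 1)
    (g : EuclideanSpace ℝ (Fin d) → ℝ)
    (hreg : ∀ i, P[y i|MeasurableSpace.comap (x i) inferInstance] =ᵐ[P]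
      fun ω => g (x i ω)) :
    ∀ i, ∀ᵐ ω ∂P, |g (x i ω)| ≤ 1 := by
  intro i
  have hm : MeasurableSpace.comap (x i) inferInstance ≤ _ := (hxm i).comap_le
  have hyint : Integrable (y i) P :=
    Integrable.mono' (integrable_const 1) (hym i).aestronglyMeasurable
      (ae_of_all _ fun ω => by
        rw [Real.norm_eq_abs, abs_le]; exact ⟨(hy1 i ω).1, (hy1 i ω).2⟩)
  have hle := condExp_mono (m := MeasurableSpace.comap (x i) inferInstance)
    hyint (integrable_const 1) (ae_of_all _ fun ω => (hy1 i ω).2)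
  have hge := condExp_mono (m := MeasurableSpace.comap (x i) inferInstance)
    (integrable_const (-1)) hyint (ae_of_all _ fun ω => (hy1 i ω).1)
  rw [condExp_const hm] at hle hge
  filter_upwards [hreg i, hle, hge] with ω h1 h2 h3
  rw [← h1, abs_le]; exact ⟨h3, h2⟩

lemma aux_hyg {Ω : Type*} [MeasurableSpace Ω] (P : Measure Ω) [IsProbabilityMeasure P]
    {n d : ℕ} (x : Fin n → Ω → EuclideanSpace ℝ (Fin d)) (y : Fin n → Ω → ℝ)
    (hxm : ∀ i, Measurable (x i)) (hym : ∀ i, Measurable (y i))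
    (hy1 : ∀ i ω, y i ω ∈ Set.Icc (-1 : ℝ) 1)
    (g : EuclideanSpace ℝ (Fin d) → ℝ) (hg : Measurable g)
    (hreg : ∀ i, P[y i|MeasurableSpace.comap (x i) inferInstance] =ᵐ[P]
      fun ω => g (x i ω)) :
    ∀ i, ∫ ω, g (x i ω) * y i ω ∂P = ∫ ω, g (x i ω) * g (x i ω) ∂P := by
  intro i
  have hm : MeasurableSpace.comap (x i) inferInstance ≤ _ := (hxm i).comap_le
  have hG1 := aux_hG1 P x y hxm hym hy1 g hreg i
  have hyint : Integrable (y i) P :=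
    Integrable.mono' (integrable_const 1) (hym i).aestronglyMeasurable
      (ae_of_all _ fun ω => by
        rw [Real.norm_eq_abs, abs_le]; exact ⟨(hy1 i ω).1, (hy1 i ω).2⟩)
  have hxim : Measurable[MeasurableSpace.comap (x i) inferInstance] (x i) :=
    fun s hs => ⟨s, hs, rfl⟩
  have hGsm : StronglyMeasurable[MeasurableSpace.comap (x i) inferInstance]
      fun ω => g (x i ω) := (hg.comp hxim).stronglyMeasurable
  have hfg_int : Integrable ((fun ω => g (x i ω)) * y i) P := by
    refine Integrable.mono' (integrable_const 1)
      ((hg.comp (hxm i)).mul (hym i)).aestronglyMeasurable ?_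
    filter_upwards [hG1] with ω hω
    rw [Pi.mul_apply, Real.norm_eq_abs, abs_mul]
    have hy' : |y i ω| ≤ 1 := abs_le.2 ⟨(hy1 i ω).1, (hy1 i ω).2⟩
    nlinarith [abs_nonneg (g (x i ω)), abs_nonneg (y i ω)]
  have hmul := condExp_mul_of_stronglyMeasurable_left hGsm hfg_int hyint
  calc ∫ ω, g (x i ω) * y i ω ∂P
      = ∫ ω, (P[(fun ω => g (x i ω)) * y i|MeasurableSpace.comap (x i) inferInstance]) ω ∂P :=
        (integral_condExp hm).symm
    _ = ∫ ω, g (x i ω) * g (x i ω) ∂P := by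
        refine integral_congr_ae ?_
        filter_upwards [hmul, hreg i] with ω h1 h2
        rw [h1, Pi.mul_apply, h2]

set_option maxHeartbeats 2000000 in
/-- for a fixed `f : ℝ^d → [−1,1]`, with `z_i = y_i − g(x_i)` the noise and
`σ² = E[Var[y|x]]`, the events
`A_f = {(1/n)Σ(y_i − f(x_i))² ≤ σ² − ε}`, `B = {(1/n)Σ z_i² ≥ σ² − ε/6}`,
`C = {(1/n)Σ z_i g(x_i) ≥ −ε/6}`, `D_f = {(1/n)Σ f(x_i) z_i ≥ ε/4}` satisfy
(i) `A_f ∩ B ∩ C ⊆ D_f` and (ii) `P(Bᶜ ∪ Cᶜ) ≤ 2 exp(−nε²/8³)`. -/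
theorem statement5 {Ω : Type*} [MeasurableSpace Ω] (P : Measure Ω) [IsProbabilityMeasure P]
    (n d : ℕ) (hn : 0 < n)
    (x : Fin n → Ω → EuclideanSpace ℝ (Fin d)) (y : Fin n → Ω → ℝ)
    (hxm : ∀ i, Measurable (x i)) (hym : ∀ i, Measurable (y i))
    (hy1 : ∀ i ω, y i ω ∈ Set.Icc (-1 : ℝ) 1)
    (hindep : iIndepFun (fun i ω => (x i ω, y i ω)) P)
    (hident : ∀ i j, IdentDistrib (fun ω => (x i ω, y i ω)) (fun ω => (x j ω, y j ω)) P P)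
    (g : EuclideanSpace ℝ (Fin d) → ℝ) (hg : Measurable g)
    (hreg : ∀ i, P[y i|MeasurableSpace.comap (x i) inferInstance] =ᵐ[P]
      fun ω => g (x i ω))
    (σ2 : ℝ) (hσpos : 0 < σ2) (hσ : ∀ i, σ2 = ∫ ω, (y i ω - g (x i ω)) ^ 2 ∂P)
    (ε : ℝ) (hε : ε ∈ Set.Ioo (0 : ℝ) 1)
    (f : EuclideanSpace ℝ (Fin d) → ℝ) (hf : Measurable f)
    (hf1 : ∀ v, f v ∈ Set.Icc (-1 : ℝ) 1) :
    ({ω | (1 / n : ℝ) * ∑ i, (y i ω - f (x i ω)) ^ 2 ≤ σ2 - ε} ∩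
        {ω | σ2 - ε / 6 ≤ (1 / n : ℝ) * ∑ i, (y i ω - g (x i ω)) ^ 2} ∩
        {ω | -(ε / 6) ≤ (1 / n : ℝ) * ∑ i, (y i ω - g (x i ω)) * g (x i ω)} ⊆
      {ω | ε / 4 ≤ (1 / n : ℝ) * ∑ i, f (x i ω) * (y i ω - g (x i ω))}) ∧
    P ({ω | σ2 - ε / 6 ≤ (1 / n : ℝ) * ∑ i, (y i ω - g (x i ω)) ^ 2}ᶜ ∪
        {ω | -(ε / 6) ≤ (1 / n : ℝ) * ∑ i, (y i ω - g (x i ω)) * g (x i ω)}ᶜ) ≤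
      ENNReal.ofReal (2 * Real.exp (-(n : ℝ) * ε ^ 2 / 8 ^ 3)) := by
  obtain ⟨hε0, hε1⟩ := hε
  have hn' : (0 : ℝ) < n := Nat.cast_pos.2 hn
  have hInt : ∀ (h : Ω → ℝ) (C : ℝ), Measurable h → (∀ᵐ ω ∂P, |h ω| ≤ C) →
      Integrable h P := fun h C hm hb =>
    Integrable.mono' (integrable_const C) hm.aestronglyMeasurable
      (by filter_upwards [hb] with ω hω; rwa [Real.norm_eq_abs])
  have hG1 := aux_hG1 P x y hxm hym hy1 g hreg
  have hyg := aux_hyg P x y hxm hym hy1 g hg hreg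
  have hy' : ∀ i ω, |y i ω| ≤ 1 := fun i ω => abs_le.2 ⟨(hy1 i ω).1, (hy1 i ω).2⟩
  have habsz : ∀ i, ∀ᵐ ω ∂P, |y i ω - g (x i ω)| ≤ 2 := by
    intro i
    filter_upwards [hG1 i] with ω hω
    calc |y i ω - g (x i ω)| ≤ |y i ω| + |g (x i ω)| := abs_sub _ _
      _ ≤ 2 := by linarith [hy' i ω]
  have hGm : ∀ i, Measurable fun ω => g (x i ω) := fun i => hg.comp (hxm i)
  have hzm : ∀ i, Measurable fun ω => y i ω - g (x i ω) := fun i => (hym i).sub (hGm i)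
  have hz2int : ∀ i, Integrable (fun ω => (y i ω - g (x i ω)) ^ 2) P := by
    intro i
    refine hInt _ 4 ((hzm i).pow_const 2) ?_
    filter_upwards [habsz i] with ω hω
    rw [abs_pow]
    calc |y i ω - g (x i ω)| ^ 2 ≤ 2 ^ 2 := pow_le_pow_left₀ (abs_nonneg _) hω 2
      _ = 4 := by norm_num
  have hGyint : ∀ i, Integrable (fun ω => g (x i ω) * y i ω) P := by
    intro i
    refine hInt _ 1 ((hGm i).mul (hym i)) ?_
    filter_upwards [hG1 i] with ω hω
    rw [abs_mul]
    nlinarith [abs_nonneg (g (x i ω)), abs_nonneg (y i ω), hy' i ω]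
  have hGGint : ∀ i, Integrable (fun ω => g (x i ω) * g (x i ω)) P := by
    intro i
    refine hInt _ 1 ((hGm i).mul (hGm i)) ?_
    filter_upwards [hG1 i] with ω hω
    rw [abs_mul]
    nlinarith [abs_nonneg (g (x i ω))]
  have hzg0 : ∀ i, ∫ ω, (y i ω - g (x i ω)) * g (x i ω) ∂P = 0 := by
    intro i
    have e : ∫ ω, (y i ω - g (x i ω)) * g (x i ω) ∂P =
        ∫ ω, (g (x i ω) * y i ω - g (x i ω) * g (x i ω)) ∂P :=
      integral_congr_ae (ae_of_all _ fun ω => by ring)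
    rw [e, integral_sub (hGyint i) (hGGint i), hyg i, sub_self]
  have hσ1 : σ2 ≤ 1 := by
    set i0 : Fin n := ⟨0, hn⟩
    have hyyint : Integrable (fun ω => y i0 ω * y i0 ω) P := by
      refine hInt _ 1 ((hym i0).mul (hym i0)) ?_
      refine ae_of_all _ fun ω => ?_
      rw [abs_mul]
      nlinarith [abs_nonneg (y i0 ω), hy' i0 ω]
    have h1 : ∫ ω, (y i0 ω - g (x i0 ω)) ^ 2 ∂P =
        ∫ ω, (y i0 ω * y i0 ω - 2 * (g (x i0 ω) * y i0 ω) +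
          g (x i0 ω) * g (x i0 ω)) ∂P :=
      integral_congr_ae (ae_of_all _ fun ω => by ring)
    have h2 : ∫ ω, (y i0 ω * y i0 ω - 2 * (g (x i0 ω) * y i0 ω) +
          g (x i0 ω) * g (x i0 ω)) ∂P =
        ∫ ω, y i0 ω * y i0 ω ∂P - 2 * ∫ ω, g (x i0 ω) * y i0 ω ∂P +
          ∫ ω, g (x i0 ω) * g (x i0 ω) ∂P := by
      rw [integral_add (f := fun ω => y i0 ω * y i0 ω - 2 * (g (x i0 ω) * y i0 ω))
          (g := fun ω => g (x i0 ω) * g (x i0 ω))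
          (hyyint.sub ((hGyint i0).const_mul 2)) (hGGint i0),
        integral_sub (f := fun ω => y i0 ω * y i0 ω) (g := fun ω => 2 * (g (x i0 ω) * y i0 ω))
          hyyint ((hGyint i0).const_mul 2), integral_const_mul]
    have hyy1 : ∫ ω, y i0 ω * y i0 ω ∂P ≤ 1 := by
      calc ∫ ω, y i0 ω * y i0 ω ∂P ≤ ∫ _ω, (1 : ℝ) ∂P :=
            integral_mono hyyint (integrable_const 1)
              (fun ω => by nlinarith [(hy1 i0 ω).1, (hy1 i0 ω).2])
        _ = 1 := by simp
    have hGG0 : 0 ≤ ∫ ω, g (x i0 ω) * g (x i0 ω) ∂P :=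
      integral_nonneg fun ω => mul_self_nonneg _
    have := hσ i0
    rw [h1, h2, hyg i0] at this
    linarith
  constructor
  · -- Part (i)
    rintro ω ⟨⟨hA, hB⟩, hC⟩
    simp only [Set.mem_setOf_eq] at hA hB hC ⊢
    have key : ∑ i, (y i ω - g (x i ω)) ^ 2 +
        2 * ∑ i, (y i ω - g (x i ω)) * g (x i ω) -
        2 * ∑ i, f (x i ω) * (y i ω - g (x i ω)) ≤
        ∑ i, (y i ω - f (x i ω)) ^ 2 := by
      rw [Finset.mul_sum, Finset.mul_sum, ← Finset.sum_add_distrib, ← Finset.sum_sub_distrib]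
      refine Finset.sum_le_sum fun i _ => ?_
      nlinarith [sq_nonneg (g (x i ω) - f (x i ω))]
    have h5 := mul_le_mul_of_nonneg_left key (le_of_lt (one_div_pos.2 hn'))
    have h6 : (1 / n : ℝ) * (∑ i, (y i ω - g (x i ω)) ^ 2 +
        2 * ∑ i, (y i ω - g (x i ω)) * g (x i ω) -
        2 * ∑ i, f (x i ω) * (y i ω - g (x i ω))) =
        (1 / n : ℝ) * ∑ i, (y i ω - g (x i ω)) ^ 2 +
        2 * ((1 / n : ℝ) * ∑ i, (y i ω - g (x i ω)) * g (x i ω)) -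
        2 * ((1 / n : ℝ) * ∑ i, f (x i ω) * (y i ω - g (x i ω))) := by ring
    rw [h6] at h5
    linarith
  · -- Part (ii)
    set W1 : Fin n → Ω → ℝ := fun i ω => σ2 - (y i ω - g (x i ω)) ^ 2 with hW1
    set W2 : Fin n → Ω → ℝ := fun i ω => -((y i ω - g (x i ω)) * g (x i ω)) with hW2
    have hW1m : ∀ i, Measurable (W1 i) := fun i => ((hzm i).pow_const 2).const_sub σ2
    have hW2m : ∀ i, Measurable (W2 i) := fun i => ((hzm i).mul (hGm i)).neg
    have hind1 : iIndepFun W1 P :=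
      hindep.comp (fun _ (p : EuclideanSpace ℝ (Fin d) × ℝ) => σ2 - (p.2 - g p.1) ^ 2)
        (fun _ => ((measurable_snd.sub (hg.comp measurable_fst)).pow_const 2).const_sub σ2)
    have hind2 : iIndepFun W2 P :=
      hindep.comp (fun _ (p : EuclideanSpace ℝ (Fin d) × ℝ) => -((p.2 - g p.1) * g p.1))
        (fun _ => ((measurable_snd.sub (hg.comp measurable_fst)).mul
          (hg.comp measurable_fst)).neg)
    have hz2bd : ∀ i, ∀ᵐ ω ∂P, (y i ω - g (x i ω)) ^ 2 ≤ 4 := by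
      intro i
      filter_upwards [habsz i] with ω hω
      nlinarith [(abs_le.1 hω).1, (abs_le.1 hω).2]
    have hch1 : P {ω | (n : ℝ) * (ε / 6) ≤ ∑ i, W1 i ω} ≤
        ENNReal.ofReal (Real.exp (-(n : ℝ) * (ε / 6) ^ 2 / (4 * (32 / 9)))) := by
      refine chernoff_aux P n W1 hW1m hind1 4 (32 / 9) (ε / 6) (by norm_num)
        (by linarith) ?_ ?_ ?_ (by nlinarith)
      · intro i
        filter_upwards [hz2bd i] with ω hω
        simp only [hW1, abs_le]
        constructor <;> nlinarith [sq_nonneg (y i ω - g (x i ω)), hσpos, hσ1]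
      · intro i
        simp only [hW1]
        rw [integral_sub (integrable_const σ2) (hz2int i), integral_const]
        simp [← hσ i]
      · intro i
        have hW1sq_int : Integrable (fun ω => (W1 i ω) ^ 2) P := by
          refine hInt _ 25 ((hW1m i).pow_const 2) ?_
          filter_upwards [hz2bd i] with ω hω
          simp only [hW1, abs_pow]
          have h1 : |σ2 - (y i ω - g (x i ω)) ^ 2| ≤ 5 := by
            rw [abs_le]
            constructor <;> nlinarith [sq_nonneg (y i ω - g (x i ω)), hσpos, hσ1]
          calc |σ2 - (y i ω - g (x i ω)) ^ 2| ^ 2 ≤ 5 ^ 2 :=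
                pow_le_pow_left₀ (abs_nonneg _) h1 2
            _ = 25 := by norm_num
        have hmono : ∫ ω, (W1 i ω) ^ 2 ∂P ≤
            ∫ ω, (σ2 ^ 2 + (4 - 2 * σ2) * (y i ω - g (x i ω)) ^ 2) ∂P := by
          refine integral_mono_ae hW1sq_int
            ((integrable_const _).add ((hz2int i).const_mul _)) ?_
          filter_upwards [hz2bd i] with ω hω
          simp only [hW1]
          nlinarith [sq_nonneg (y i ω - g (x i ω))]
        have hcomp : ∫ ω, (σ2 ^ 2 + (4 - 2 * σ2) * (y i ω - g (x i ω)) ^ 2) ∂P =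
            σ2 ^ 2 + (4 - 2 * σ2) * σ2 := by
          rw [integral_add (integrable_const _) ((hz2int i).const_mul _),
            integral_const, integral_const_mul, ← hσ i]
          simp
        rw [hcomp] at hmono
        nlinarith [hσpos, hσ1]
    have hch2 : P {ω | (n : ℝ) * (ε / 6) ≤ ∑ i, W2 i ω} ≤
        ENNReal.ofReal (Real.exp (-(n : ℝ) * (ε / 6) ^ 2 / (4 * (32 / 9)))) := by
      refine chernoff_aux P n W2 hW2m hind2 4 (32 / 9) (ε / 6) (by norm_num)
        (by linarith) ?_ ?_ ?_ (by nlinarith)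
      · intro i
        filter_upwards [habsz i, hG1 i] with ω h1 h2
        simp only [hW2, abs_neg, abs_mul]
        have hm2 : |y i ω - g (x i ω)| * |g (x i ω)| ≤ 2 := by
          nlinarith [abs_nonneg (y i ω - g (x i ω)), abs_nonneg (g (x i ω))]
        linarith
      · intro i
        simp only [hW2]
        rw [integral_neg, hzg0 i, neg_zero]
      · intro i
        have hW2sq_int : Integrable (fun ω => (W2 i ω) ^ 2) P := by
          refine hInt _ 4 ((hW2m i).pow_const 2) ?_
          filter_upwards [habsz i, hG1 i] with ω h1 h2
          simp only [hW2, abs_pow, abs_neg, abs_mul]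
          have hm2 : |y i ω - g (x i ω)| * |g (x i ω)| ≤ 2 := by
            nlinarith [abs_nonneg (y i ω - g (x i ω)), abs_nonneg (g (x i ω))]
          nlinarith [mul_nonneg (abs_nonneg (y i ω - g (x i ω))) (abs_nonneg (g (x i ω)))]
        have hmono : ∫ ω, (W2 i ω) ^ 2 ∂P ≤ ∫ ω, (y i ω - g (x i ω)) ^ 2 ∂P := by
          refine integral_mono_ae hW2sq_int (hz2int i) ?_
          filter_upwards [hG1 i] with ω hω
          simp only [hW2]
          have hg2 : (g (x i ω)) ^ 2 ≤ 1 := by nlinarith [sq_abs (g (x i ω)), abs_nonneg (g (x i ω))]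
          nlinarith [mul_le_mul_of_nonneg_left hg2 (sq_nonneg (y i ω - g (x i ω)))]
        rw [← hσ i] at hmono
        linarith
    have hsub1 : {ω | σ2 - ε / 6 ≤ (1 / n : ℝ) * ∑ i, (y i ω - g (x i ω)) ^ 2}ᶜ ⊆
        {ω | (n : ℝ) * (ε / 6) ≤ ∑ i, W1 i ω} := by
      intro ω hω
      simp only [Set.mem_compl_iff, Set.mem_setOf_eq, not_le] at hω
      simp only [Set.mem_setOf_eq, hW1]
      have hS : ∑ i, (σ2 - (y i ω - g (x i ω)) ^ 2) =
          (n : ℝ) * σ2 - ∑ i, (y i ω - g (x i ω)) ^ 2 := by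
        rw [Finset.sum_sub_distrib, Finset.sum_const, Finset.card_univ, Fintype.card_fin,
          nsmul_eq_mul]
      rw [hS]
      have h2 : ∑ i, (y i ω - g (x i ω)) ^ 2 < (n : ℝ) * (σ2 - ε / 6) := by
        have h3 := mul_lt_mul_of_pos_left hω hn'
        rwa [show (n : ℝ) * ((1 / n : ℝ) * ∑ i, (y i ω - g (x i ω)) ^ 2) =
          ∑ i, (y i ω - g (x i ω)) ^ 2 from by field_simp] at h3
      rw [mul_sub] at h2
      linarith
    have hsub2 : {ω | -(ε / 6) ≤ (1 / n : ℝ) * ∑ i, (y i ω - g (x i ω)) * g (x i ω)}ᶜ ⊆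
        {ω | (n : ℝ) * (ε / 6) ≤ ∑ i, W2 i ω} := by
      intro ω hω
      simp only [Set.mem_compl_iff, Set.mem_setOf_eq, not_le] at hω
      simp only [Set.mem_setOf_eq, hW2]
      have hS : ∑ i, -((y i ω - g (x i ω)) * g (x i ω)) =
          -∑ i, (y i ω - g (x i ω)) * g (x i ω) := by rw [Finset.sum_neg_distrib]
      rw [hS]
      have h2 : ∑ i, (y i ω - g (x i ω)) * g (x i ω) < (n : ℝ) * (-(ε / 6)) := by
        have h3 := mul_lt_mul_of_pos_left hω hn'
        rwa [show (n : ℝ) * ((1 / n : ℝ) * ∑ i, (y i ω - g (x i ω)) * g (x i ω)) =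
          ∑ i, (y i ω - g (x i ω)) * g (x i ω) from by field_simp] at h3
      nlinarith
    have e512 : Real.exp (-(n : ℝ) * (ε / 6) ^ 2 / (4 * (32 / 9))) +
        Real.exp (-(n : ℝ) * (ε / 6) ^ 2 / (4 * (32 / 9))) =
        2 * Real.exp (-(n : ℝ) * ε ^ 2 / 8 ^ 3) := by
      rw [show (-(n : ℝ) * (ε / 6) ^ 2 / (4 * (32 / 9))) = -(n : ℝ) * ε ^ 2 / 8 ^ 3 from by
        ring]
      ring
    calc P ({ω | σ2 - ε / 6 ≤ (1 / n : ℝ) * ∑ i, (y i ω - g (x i ω)) ^ 2}ᶜ ∪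
          {ω | -(ε / 6) ≤ (1 / n : ℝ) * ∑ i, (y i ω - g (x i ω)) * g (x i ω)}ᶜ)
        ≤ P {ω | σ2 - ε / 6 ≤ (1 / n : ℝ) * ∑ i, (y i ω - g (x i ω)) ^ 2}ᶜ +
          P {ω | -(ε / 6) ≤ (1 / n : ℝ) * ∑ i, (y i ω - g (x i ω)) * g (x i ω)}ᶜ :=
          measure_union_le _ _
      _ ≤ ENNReal.ofReal (Real.exp (-(n : ℝ) * (ε / 6) ^ 2 / (4 * (32 / 9)))) +
          ENNReal.ofReal (Real.exp (-(n : ℝ) * (ε / 6) ^ 2 / (4 * (32 / 9)))) :=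
          add_le_add ((measure_mono hsub1).trans hch1) ((measure_mono hsub2).trans hch2)
      _ = ENNReal.ofReal (2 * Real.exp (-(n : ℝ) * ε ^ 2 / 8 ^ 3)) := by
          rw [← ENNReal.ofReal_add (Real.exp_pos _).le (Real.exp_pos _).le, e512]
end

section
/- Let u, v, x ∈ ℝ^d satisfy ‖u‖ ≤ 1.01, ‖v‖ ≤ 1.01, |⟨u, v⟩| ≤ 1/100, and ‖x‖ ≤ 1.1. Then it is not the case that both ⟨x, u⟩ ≥ 0.8 and ⟨x, v⟩ ≥ 0.8. -/
/-- a point in the ball of radius 1.1 can have inner product at least 0.8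
with at most one of two near-orthogonal directions of norm at most 1.01. -/
theorem statement16 {d : ℕ} (u v x : EuclideanSpace ℝ (Fin d))
    (hu : ‖u‖ ≤ 1.01) (hv : ‖v‖ ≤ 1.01) (huv : |(inner ℝ u v : ℝ)| ≤ 1 / 100)
    (hx : ‖x‖ ≤ 1.1) :
    ¬((0.8 : ℝ) ≤ (inner ℝ x u : ℝ) ∧ (0.8 : ℝ) ≤ (inner ℝ x v : ℝ)) := by
  rintro ⟨h1, h2⟩
  have hsum : (1.6 : ℝ) ≤ (inner ℝ x (u + v) : ℝ) := by
    rw [inner_add_right]; linarith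
  have hcs : (inner ℝ x (u + v) : ℝ) ≤ ‖x‖ * ‖u + v‖ := real_inner_le_norm _ _
  have hn2 : ‖u + v‖ ^ 2 ≤ 2.0602 := by
    rw [norm_add_sq_real]
    have := abs_le.1 huv
    nlinarith [norm_nonneg u, norm_nonneg v]
  have hn : ‖u + v‖ ≤ 1.44 := by nlinarith [norm_nonneg (u + v)]
  nlinarith [norm_nonneg x, norm_nonneg (u + v)]
end
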